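/- Assume k has characteristic zero. Let τ̂ denote the automorphism of the fraction field Frac(A) induced by τ. Every element f ∈ Frac(A) with τ̂(f) = f lies in the image of k in Frac(A); that is, the fixed field of τ̂ on Frac(A) is k. -/

import Mathlib

/-- The element `x` of `A`. -/
noncomputable def Xa (k : Type*) [Field k] : AddMonoidAlgebra k (ℤ × ℤ × ℤ) :=
  AddMonoidAlgebra.single ((1 : ℤ), (0 : ℤ), (0 : ℤ)) 1

/-- The element `y` of `A`. -/
noncomputable def Ya (k : Type*) [Field k] : AddMonoidAlgebra k (ℤ × ℤ × ℤ) :=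
  AddMonoidAlgebra.single ((0 : ℤ), (1 : ℤ), (0 : ℤ)) 1

/-- The element `u` of `A`. -/
noncomputable def Ua (k : Type*) [Field k] : AddMonoidAlgebra k (ℤ × ℤ × ℤ) :=
  AddMonoidAlgebra.single ((0 : ℤ), (0 : ℤ), (1 : ℤ)) 1

instance (k : Type*) [Field k] : IsDomain (AddMonoidAlgebra k (ℤ × ℤ × ℤ)) :=
  NoZeroDivisors.to_isDomain _

namespace Stmt7Aux

open AddMonoidAlgebra

variable {k : Type*} [Field k]

local notation "G3" => (ℤ × ℤ × ℤ)
local notation "AA" => AddMonoidAlgebra k (ℤ × ℤ × ℤ)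

/-- The matrix action on exponents. -/
def Mm (v : G3) : G3 := (5*v.1 + v.2.1, 4*v.1 + v.2.1, v.2.2)

/-- Its inverse. -/
def Mi (v : G3) : G3 := (v.1 - v.2.1, -4*v.1 + 5*v.2.1, v.2.2)

lemma Mm_Mi (v : G3) : Mm (Mi v) = v := by
  simp [Mm, Mi, Prod.ext_iff]; omega

lemma Mi_Mm (v : G3) : Mi (Mm v) = v := by
  simp [Mm, Mi, Prod.ext_iff]; omega

/-! ### The order functional -/

noncomputable def E (v : G3) : Lex (ℝ × ℤ) :=
  toLex ((2 + 2*Real.sqrt 2) * v.1 + v.2.1, v.2.2)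

lemma sqrt2_irr_lin {a b : ℤ} (h : (2 + 2*Real.sqrt 2) * a + b = 0) : a = 0 ∧ b = 0 := by
  by_cases ha : a = 0
  · refine ⟨ha, ?_⟩
    rw [ha] at h
    have : (b:ℝ) = 0 := by push_cast at h; linarith
    exact_mod_cast this
  · exfalso
    apply irrational_sqrt_two
    refine ⟨(-(b : ℚ) - 2*a) / (2*a), ?_⟩
    have h2a : ((2:ℝ)*a) ≠ 0 := by
      simp only [mul_ne_zero_iff]
      exact ⟨two_ne_zero, Int.cast_ne_zero.mpr ha⟩
    push_cast
    field_simp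
    nlinarith [h]

lemma E_add (v w : G3) : E (v + w) = E v + E w := by
  have h : E v + E w = toLex (((2 + 2*Real.sqrt 2) * v.1 + v.2.1)
      + ((2 + 2*Real.sqrt 2) * w.1 + w.2.1), v.2.2 + w.2.2) := rfl
  rw [h]
  unfold E
  congr 1
  refine Prod.ext ?_ rfl
  show (2 + 2*Real.sqrt 2) * ((v.1 + w.1 : ℤ) : ℝ) + ((v.2.1 + w.2.1 : ℤ) : ℝ) = _
  push_cast
  ring

lemma E_inj : Function.Injective E := by
  intro v w h
  unfold E at h
  have h' := toLex.injective h
  rw [Prod.mk.injEq] at h'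
  obtain ⟨h1, h2⟩ := h'
  have h3 : (2 + 2*Real.sqrt 2) * ((v.1 - w.1 : ℤ) : ℝ) + ((v.2.1 - w.2.1 : ℤ) : ℝ) = 0 := by
    push_cast
    linarith
  obtain ⟨e1, e2⟩ := sqrt2_irr_lin h3
  have : v.1 = w.1 := by omega
  have : v.2.1 = w.2.1 := by omega
  refine Prod.ext ?_ (Prod.ext ?_ ?_) <;> omega

lemma E_Mm (v : G3) :
    E (Mm v) = toLex ((3 + 2*Real.sqrt 2) * ((2 + 2*Real.sqrt 2) * v.1 + v.2.1), v.2.2) := by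
  unfold E Mm
  congr 1
  refine Prod.ext ?_ rfl
  show (2 + 2*Real.sqrt 2) * ((5 * v.1 + v.2.1 : ℤ) : ℝ) + ((4 * v.1 + v.2.1 : ℤ) : ℝ) = _
  have h2 : Real.sqrt 2 * Real.sqrt 2 = 2 := Real.mul_self_sqrt (by norm_num)
  push_cast
  linear_combination (-4*(v.1:ℝ)) * h2

lemma E_Mm_le {v w : G3} (h : E v ≤ E w) : E (Mm v) ≤ E (Mm w) := by
  have hpos : (0:ℝ) < 3 + 2*Real.sqrt 2 := by positivity
  rw [E_Mm, E_Mm]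
  unfold E at h
  rw [Prod.Lex.le_iff] at h ⊢
  rcases h with h | ⟨h1, h2⟩
  · exact Or.inl (mul_lt_mul_of_pos_left h hpos)
  · exact Or.inr ⟨by simp only [ofLex_toLex] at h1 ⊢; rw [h1], h2⟩


/-! ### Leading exponents -/

/-- `v` is the (unique) `E`-maximal exponent of `p`. -/
def IsTop (p : AddMonoidAlgebra k (ℤ × ℤ × ℤ)) (v : G3) : Prop :=
  v ∈ p.coeff.support ∧ ∀ w ∈ p.coeff.support, E w ≤ E v

lemma isTop_unique {p : AA} {v w : G3} (hv : IsTop p v) (hw : IsTop p w) : v = w :=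
  E_inj (le_antisymm (hw.2 v hv.1) (hv.2 w hw.1))

lemma exists_isTop {p : AA} (hp : p ≠ 0) : ∃ v, IsTop p v := by
  obtain ⟨v, hv, hmax⟩ := p.coeff.support.exists_max_image E
    (Finsupp.support_nonempty_iff.mpr (AddMonoidAlgebra.coeff_eq_zero.not.mpr hp))
  exact ⟨v, hv, hmax⟩

lemma mul_apply_top {p q : AA} {vp vq : G3} (hp : IsTop p vp) (hq : IsTop q vq) :
    (p * q).coeff (vp + vq) = p.coeff vp * q.coeff vq := by
  classical
  rw [AddMonoidAlgebra.coeff_mul]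
  unfold Finsupp.sum
  rw [Finset.sum_eq_single vp]
  · dsimp only
    rw [Finset.sum_eq_single vq]
    · rw [if_pos rfl]
    · intro a₂ ha₂ hne
      refine if_neg (fun he => hne ?_)
      exact add_left_cancel he
    · intro h
      exact absurd hq.1 h
  · intro a₁ ha₁ hne
    refine Finset.sum_eq_zero (fun a₂ ha₂ => if_neg (fun he => ?_))
    have hlt : E a₁ + E a₂ < E vp + E vq :=
      add_lt_add_of_lt_of_le
        (lt_of_le_of_ne (hp.2 a₁ ha₁) (fun hEE => hne (E_inj hEE))) (hq.2 a₂ ha₂)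
    have : E a₁ + E a₂ = E vp + E vq := by rw [← E_add, ← E_add, he]
    exact hlt.ne this
  · intro h
    exact absurd hp.1 h

lemma isTop_mul {p q : AA} {vp vq : G3} (hp : IsTop p vp) (hq : IsTop q vq)
    (hne : p.coeff vp * q.coeff vq ≠ 0) : IsTop (p * q) (vp + vq) := by
  constructor
  · rw [Finsupp.mem_support_iff, mul_apply_top hp hq]
    exact hne
  · intro w hw
    have := AddMonoidAlgebra.support_coeff_mul_subset p q hw
    rw [Finset.mem_add] at this
    obtain ⟨a, ha, b, hb, rfl⟩ := this
    rw [E_add, E_add]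
    exact add_le_add (hp.2 a ha) (hq.2 b hb)


/-! ### The action of `τ` on monomials -/

/-- The monomial `single g 1` as a unit. -/
noncomputable def sU (g : G3) : (AddMonoidAlgebra k (ℤ × ℤ × ℤ))ˣ where
  val := AddMonoidAlgebra.single g 1
  inv := AddMonoidAlgebra.single (-g) 1
  val_inv := by rw [AddMonoidAlgebra.single_mul_single]; simp [AddMonoidAlgebra.one_def]
  inv_val := by rw [AddMonoidAlgebra.single_mul_single]; simp [AddMonoidAlgebra.one_def]

@[simp] lemma sU_val (g : G3) : ((sU g : (AA)ˣ) : AA) = AddMonoidAlgebra.single g 1 := rfl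

lemma sU_add (g h : G3) : sU (k := k) (g + h) = sU g * sU h :=
  Units.ext (by simp [AddMonoidAlgebra.single_mul_single])

/-- `sU` as a monoid hom. -/
noncomputable def sHom : Multiplicative G3 →* (AA)ˣ where
  toFun g := sU g.toAdd
  map_one' := Units.ext (by simp [AddMonoidAlgebra.one_def])
  map_mul' a b := Units.ext (by simp [AddMonoidAlgebra.single_mul_single])

lemma sU_zsmul (n : ℤ) (g : G3) : sU (k := k) (n • g) = (sU g) ^ n := by
  have h := map_zpow (sHom (k := k)) (Multiplicative.ofAdd g) n
  rw [← ofAdd_zsmul] at h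
  exact h

/-- scalar units. -/
noncomputable def cHom : kˣ →* (AA)ˣ :=
  Units.map (algebraMap k (AddMonoidAlgebra k (ℤ × ℤ × ℤ)) : k →* AA)

@[simp] lemma cHom_val (r : kˣ) : ((cHom r : (AA)ˣ) : AA) = AddMonoidAlgebra.single 0 (r : k) := by
  show algebraMap k (AddMonoidAlgebra k (ℤ × ℤ × ℤ)) (r : k) = _
  simp [AddMonoidAlgebra.coe_algebraMap]

lemma tau_single [CharZero k] (τ : AA ≃ₐ[k] AA)
    (hx : τ (AddMonoidAlgebra.single ((1:ℤ),(0:ℤ),(0:ℤ)) 1)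
        = AddMonoidAlgebra.single ((5:ℤ),(4:ℤ),(0:ℤ)) 1)
    (hy : τ (AddMonoidAlgebra.single ((0:ℤ),(1:ℤ),(0:ℤ)) 1)
        = AddMonoidAlgebra.single ((1:ℤ),(1:ℤ),(0:ℤ)) 1)
    (hu : τ (AddMonoidAlgebra.single ((0:ℤ),(0:ℤ),(1:ℤ)) 1)
        = AddMonoidAlgebra.single ((0:ℤ),(0:ℤ),(1:ℤ)) (2:k))
    (v : G3) (r : k) :
    τ (AddMonoidAlgebra.single v r)
      = AddMonoidAlgebra.single (Mm v) ((2:k) ^ v.2.2 * r) := by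
  classical
  set TU : (AA)ˣ →* (AA)ˣ := Units.map (τ : AA →* AA) with hTU
  have hcoe : ∀ w : (AA)ˣ, τ (w : AA) = ((TU w : (AA)ˣ) : AA) := by
    intro w; rw [hTU, Units.coe_map]; rfl
  have hT1 : TU (sU ((1:ℤ),(0:ℤ),(0:ℤ))) = sU ((5:ℤ),(4:ℤ),(0:ℤ)) := by
    apply Units.ext
    rw [← hcoe, sU_val, sU_val, hx]
  have hT2 : TU (sU ((0:ℤ),(1:ℤ),(0:ℤ))) = sU ((1:ℤ),(1:ℤ),(0:ℤ)) := by
    apply Units.ext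
    rw [← hcoe, sU_val, sU_val, hy]
  have hT3 : TU (sU ((0:ℤ),(0:ℤ),(1:ℤ)))
      = cHom (Units.mk0 (2:k) two_ne_zero) * sU ((0:ℤ),(0:ℤ),(1:ℤ)) := by
    apply Units.ext
    rw [← hcoe, sU_val, Units.val_mul, cHom_val, sU_val, hu,
      AddMonoidAlgebra.single_mul_single]
    simp
  have hv : v = v.1 • ((1:ℤ),(0:ℤ),(0:ℤ)) + v.2.1 • ((0:ℤ),(1:ℤ),(0:ℤ))
      + v.2.2 • ((0:ℤ),(0:ℤ),(1:ℤ)) := by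
    simp [Prod.ext_iff]
  have key : τ (AddMonoidAlgebra.single v (1:k))
      = AddMonoidAlgebra.single (Mm v) ((2:k) ^ v.2.2) := by
    have h1 : sU (k := k) v = (sU ((1:ℤ),(0:ℤ),(0:ℤ))) ^ v.1
        * (sU ((0:ℤ),(1:ℤ),(0:ℤ))) ^ v.2.1 * (sU ((0:ℤ),(0:ℤ),(1:ℤ))) ^ v.2.2 := by
      rw [← sU_zsmul, ← sU_zsmul, ← sU_zsmul, ← sU_add, ← sU_add, ← hv]
    have h2 : TU (sU (k := k) v)
        = cHom ((Units.mk0 (2:k) two_ne_zero) ^ v.2.2) * sU (Mm v) := by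
      rw [h1, map_mul, map_mul, map_zpow, map_zpow, map_zpow, hT1, hT2, hT3, mul_zpow,
        map_zpow, ← sU_zsmul, ← sU_zsmul, ← sU_zsmul, mul_left_comm, ← sU_add, ← sU_add]
      congr 2
      simp [Mm, Prod.ext_iff]
      omega
    calc τ (AddMonoidAlgebra.single v (1:k)) = ((TU (sU v) : (AA)ˣ) : AA) := by
          rw [← sU_val, hcoe]
      _ = AddMonoidAlgebra.single (0 : G3) ((2:k) ^ v.2.2)
            * AddMonoidAlgebra.single (Mm v) 1 := by
          rw [h2, Units.val_mul, cHom_val, sU_val, Units.val_zpow_eq_zpow_val, Units.val_mk0]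
      _ = AddMonoidAlgebra.single (Mm v) ((2:k) ^ v.2.2) := by
          rw [AddMonoidAlgebra.single_mul_single]; simp
  have hsm : AddMonoidAlgebra.single v r = r • AddMonoidAlgebra.single v (1:k) := by
    rw [AddMonoidAlgebra.smul_single', mul_one]
  rw [hsm, map_smul, key, AddMonoidAlgebra.smul_single', mul_comm]


/-! ### Coefficient formula for `τ` -/

lemma tau_apply [CharZero k] (τ : AA ≃ₐ[k] AA)
    (hs : ∀ (v : G3) (r : k), τ (AddMonoidAlgebra.single v r)
      = AddMonoidAlgebra.single (Mm v) ((2:k) ^ v.2.2 * r))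
    (p : AA) (w : G3) :
    (τ p).coeff w = (2:k) ^ w.2.2 * p.coeff (Mi w) := by
  classical
  induction p using AddMonoidAlgebra.induction with
  | zero => simp
  | single_add a b f ha hb ih =>
    have hsab := hs a b
    rw [map_add, AddMonoidAlgebra.coeff_add, AddMonoidAlgebra.coeff_add, Finsupp.add_apply,
      Finsupp.add_apply, ih, hsab]
    rw [mul_add]
    congr 1
    by_cases hcase : Mm a = w
    · subst hcase
      rw [Mi_Mm]
      rw [AddMonoidAlgebra.coeff_single_apply, if_pos rfl, AddMonoidAlgebra.coeff_single_apply, if_pos rfl]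
      rfl
    · rw [AddMonoidAlgebra.coeff_single_apply, if_neg hcase, AddMonoidAlgebra.coeff_single_apply,
        if_neg (fun h : a = Mi w => hcase (by rw [h, Mm_Mi])), mul_zero]

lemma tau_value [CharZero k] (τ : AA ≃ₐ[k] AA)
    (hs : ∀ (v : G3) (r : k), τ (AddMonoidAlgebra.single v r)
      = AddMonoidAlgebra.single (Mm v) ((2:k) ^ v.2.2 * r))
    (p : AA) (v : G3) :
    (τ p).coeff (Mm v) = (2:k) ^ v.2.2 * p.coeff v := by
  rw [tau_apply τ hs p (Mm v), Mi_Mm]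
  rfl

lemma isTop_tau [CharZero k] (τ : AA ≃ₐ[k] AA)
    (hs : ∀ (v : G3) (r : k), τ (AddMonoidAlgebra.single v r)
      = AddMonoidAlgebra.single (Mm v) ((2:k) ^ v.2.2 * r))
    {p : AA} {v : G3} (hp : IsTop p v) : IsTop (τ p) (Mm v) := by
  constructor
  · rw [Finsupp.mem_support_iff, tau_value τ hs]
    exact mul_ne_zero (zpow_ne_zero _ two_ne_zero) (Finsupp.mem_support_iff.mp hp.1)
  · intro w hw
    have h1 : Mi w ∈ p.coeff.support := by
      rw [Finsupp.mem_support_iff, tau_apply τ hs] at hw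
      rw [Finsupp.mem_support_iff]
      exact fun h => hw (by rw [h, mul_zero])
    have h2 := E_Mm_le (hp.2 (Mi w) h1)
    rwa [Mm_Mi] at h2

lemma two_zpow_inj [CharZero k] {m n : ℤ} (h : (2:k) ^ m = (2:k) ^ n) : m = n := by
  have hq : (2:ℚ) ^ m = (2:ℚ) ^ n := by
    have h2 : (((2:ℚ) ^ m : ℚ) : k) = (((2:ℚ) ^ n : ℚ) : k) := by push_cast; exact_mod_cast h
    exact_mod_cast h2
  exact zpow_right_injective₀ (by norm_num) (by norm_num) hq

/-! ### The main algebraic lemma -/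

lemma main [CharZero k] (τ : AA ≃ₐ[k] AA)
    (hs : ∀ (v : G3) (r : k), τ (AddMonoidAlgebra.single v r)
      = AddMonoidAlgebra.single (Mm v) ((2:k) ^ v.2.2 * r))
    {p q : AA} (hq : q ≠ 0) (hrel : τ p * q = p * τ q) :
    ∃ a : k, p = a • q := by
  classical
  obtain ⟨vq, hvq⟩ := exists_isTop hq
  have hqv : q.coeff vq ≠ 0 := Finsupp.mem_support_iff.mp hvq.1
  have htq : IsTop (τ q) (Mm vq) := isTop_tau τ hs hvq
  have key : ∀ p' : AA, p' ≠ 0 → τ p' * q = p' * τ q → ∀ vp, IsTop p' vp → vp = vq := by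
    intro p' hp' hrel' vp hvp
    have hpv : p'.coeff vp ≠ 0 := Finsupp.mem_support_iff.mp hvp.1
    have htp : IsTop (τ p') (Mm vp) := isTop_tau τ hs hvp
    have hLv : (τ p').coeff (Mm vp) = (2:k) ^ vp.2.2 * p'.coeff vp := tau_value τ hs p' vp
    have hRv : (τ q).coeff (Mm vq) = (2:k) ^ vq.2.2 * q.coeff vq := tau_value τ hs q vq
    have hL : IsTop (τ p' * q) (Mm vp + vq) :=
      isTop_mul htp hvq
        (by rw [hLv]; exact mul_ne_zero (mul_ne_zero (zpow_ne_zero _ two_ne_zero) hpv) hqv)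
    have hR : IsTop (p' * τ q) (vp + Mm vq) :=
      isTop_mul hvp htq
        (by rw [hRv]; exact mul_ne_zero hpv (mul_ne_zero (zpow_ne_zero _ two_ne_zero) hqv))
    have hEq : Mm vp + vq = vp + Mm vq := isTop_unique (hrel' ▸ hL) hR
    have hC : (τ p' * q).coeff (Mm vp + vq) = (p' * τ q).coeff (vp + Mm vq) := by rw [hrel', hEq]
    rw [mul_apply_top htp hvq, mul_apply_top hvp htq, hLv, hRv] at hC
    have h2' : (2:k) ^ vp.2.2 * (p'.coeff vp * q.coeff vq)
        = (2:k) ^ vq.2.2 * (p'.coeff vp * q.coeff vq) := by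
      linear_combination hC
    have h2 : (2:k) ^ vp.2.2 = (2:k) ^ vq.2.2 :=
      mul_right_cancel₀ (mul_ne_zero hpv hqv) h2'
    have hc : vp.2.2 = vq.2.2 := two_zpow_inj h2
    have hco : (5*vp.1 + vp.2.1 + vq.1, 4*vp.1 + vp.2.1 + vq.2.1, vp.2.2 + vq.2.2)
        = (vp.1 + (5*vq.1 + vq.2.1), vp.2.1 + (4*vq.1 + vq.2.1), vp.2.2 + vq.2.2) := hEq
    rw [Prod.ext_iff, Prod.ext_iff] at hco
    obtain ⟨hco1, hco2, -⟩ := hco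
    refine Prod.ext ?_ (Prod.ext ?_ ?_) <;> simp at hco1 hco2 ⊢ <;> omega
  by_cases hp : p = 0
  · exact ⟨0, by simp [hp]⟩
  obtain ⟨vp, hvp⟩ := exists_isTop hp
  have hv : vp = vq := key p hp hrel vp hvp
  subst hv
  refine ⟨p.coeff vp * (q.coeff vp)⁻¹, ?_⟩
  by_contra hne
  set p' := p - (p.coeff vp * (q.coeff vp)⁻¹) • q with hp'def
  have hp'ne : p' ≠ 0 := fun h => hne (by rw [← sub_eq_zero]; exact h)
  have hrel' : τ p' * q = p' * τ q := by
    rw [hp'def, map_sub, map_smul, sub_mul, sub_mul, smul_mul_assoc, smul_mul_assoc, hrel,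
      mul_comm (τ q) q]
  obtain ⟨vp', hvp'⟩ := exists_isTop hp'ne
  have hv' : vp' = vp := key p' hp'ne hrel' vp' hvp'
  have hmem := hvp'.1
  rw [hv', Finsupp.mem_support_iff] at hmem
  apply hmem
  rw [hp'def, AddMonoidAlgebra.coeff_sub, Finsupp.sub_apply, AddMonoidAlgebra.coeff_smul,
    Finsupp.smul_apply, smul_eq_mul]
  field_simp
  simp

end Stmt7Aux

theorem stmt7 (k : Type*) [Field k] [CharZero k]
    (τ : AddMonoidAlgebra k (ℤ × ℤ × ℤ) ≃ₐ[k] AddMonoidAlgebra k (ℤ × ℤ × ℤ))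
    (hτx : τ (Xa k) = Xa k ^ 5 * Ya k ^ 4)
    (hτy : τ (Ya k) = Xa k * Ya k)
    (hτu : τ (Ua k) = 2 * Ua k)
    (τhat : FractionRing (AddMonoidAlgebra k (ℤ × ℤ × ℤ)) ≃+*
      FractionRing (AddMonoidAlgebra k (ℤ × ℤ × ℤ)))
    (hcomp : ∀ a : AddMonoidAlgebra k (ℤ × ℤ × ℤ),
      τhat (algebraMap (AddMonoidAlgebra k (ℤ × ℤ × ℤ))
          (FractionRing (AddMonoidAlgebra k (ℤ × ℤ × ℤ))) a)
        = algebraMap (AddMonoidAlgebra k (ℤ × ℤ × ℤ))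
          (FractionRing (AddMonoidAlgebra k (ℤ × ℤ × ℤ))) (τ a))
    (f : FractionRing (AddMonoidAlgebra k (ℤ × ℤ × ℤ))) (hf : τhat f = f) :
    ∃ a : k, f = algebraMap (AddMonoidAlgebra k (ℤ × ℤ × ℤ))
      (FractionRing (AddMonoidAlgebra k (ℤ × ℤ × ℤ)))
      (algebraMap k (AddMonoidAlgebra k (ℤ × ℤ × ℤ)) a) := by
  classical
  have hx : τ (AddMonoidAlgebra.single ((1:ℤ),(0:ℤ),(0:ℤ)) 1)
      = AddMonoidAlgebra.single ((5:ℤ),(4:ℤ),(0:ℤ)) 1 := by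
    have h5 : Xa k ^ 5 * Ya k ^ 4 = AddMonoidAlgebra.single ((5:ℤ),(4:ℤ),(0:ℤ)) 1 := by
      rw [Xa, Ya, AddMonoidAlgebra.single_pow, AddMonoidAlgebra.single_pow,
        AddMonoidAlgebra.single_mul_single]
      norm_num
    rw [← h5, ← hτx, Xa]
  have hy : τ (AddMonoidAlgebra.single ((0:ℤ),(1:ℤ),(0:ℤ)) 1)
      = AddMonoidAlgebra.single ((1:ℤ),(1:ℤ),(0:ℤ)) 1 := by
    have h5 : Xa k * Ya k = AddMonoidAlgebra.single ((1:ℤ),(1:ℤ),(0:ℤ)) 1 := by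
      rw [Xa, Ya, AddMonoidAlgebra.single_mul_single]
      norm_num
    rw [← h5, ← hτy, Ya]
  have hu : τ (AddMonoidAlgebra.single ((0:ℤ),(0:ℤ),(1:ℤ)) 1)
      = AddMonoidAlgebra.single ((0:ℤ),(0:ℤ),(1:ℤ)) (2:k) := by
    have h5 : 2 * Ua k = AddMonoidAlgebra.single ((0:ℤ),(0:ℤ),(1:ℤ)) (2:k) := by
      rw [Ua, two_mul, ← AddMonoidAlgebra.single_add]
      norm_num
    rw [← h5, ← hτu, Ua]
  have hs := Stmt7Aux.tau_single τ hx hy hu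
  obtain ⟨p, q, hqmem, hfe⟩ :=
    IsFractionRing.div_surjective (A := AddMonoidAlgebra k (ℤ × ℤ × ℤ)) f
  have hq0 : q ≠ 0 := nonZeroDivisors.ne_zero hqmem
  have hinj := IsFractionRing.injective (AddMonoidAlgebra k (ℤ × ℤ × ℤ))
    (FractionRing (AddMonoidAlgebra k (ℤ × ℤ × ℤ)))
  set φ := algebraMap (AddMonoidAlgebra k (ℤ × ℤ × ℤ))
    (FractionRing (AddMonoidAlgebra k (ℤ × ℤ × ℤ))) with hφ
  have hqh : φ q ≠ 0 := fun h => hq0 (hinj (by rw [h, map_zero]))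
  have hτq : τ q ≠ 0 := fun h => hq0 (by simpa using congrArg τ.symm h)
  have hτqh : φ (τ q) ≠ 0 := fun h => hτq (hinj (by rw [h, map_zero]))
  have h2 : φ (τ p) / φ (τ q) = φ p / φ q := by
    calc φ (τ p) / φ (τ q) = τhat (φ p / φ q) := by rw [map_div₀, hcomp, hcomp]
    _ = τhat f := by rw [hfe]
    _ = f := hf
    _ = φ p / φ q := hfe.symm
  rw [div_eq_div_iff hτqh hqh] at h2
  have hcross : τ p * q = p * τ q := by
    apply hinj
    rw [map_mul, map_mul]
    exact h2
  obtain ⟨a, hpa⟩ := Stmt7Aux.main τ hs hq0 hcross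
  refine ⟨a, ?_⟩
  rw [← hfe, hpa, Algebra.smul_def, map_mul, mul_div_assoc, div_self hqh, mul_one]
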